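/- The Hessian matrix (σᵢⱼ) of the surface tension σ is positive definite at every point of the open triangle T. -/

import Mathlib

open Real

/-- The Hessian matrix of the surface tension is positive definite on the open triangle `T`. -/
lemma cot_quad_key (cA sA cB sB cC sC x y : ℝ) (hsA : 0 < sA) (hsB : 0 < sB) (hsC : 0 < sC)
    (hs : sC = sA * cB + cA * sB) (hc : cC = sA * sB - cA * cB)
    (hxy : x ≠ 0 ∨ y ≠ 0) :
    0 < cA / sA * x ^ 2 + cB / sB * y ^ 2 + cC / sC * (x + y) ^ 2 := by
  subst hs hc
  have heq : cA / sA * x ^ 2 + cB / sB * y ^ 2 +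
      (sA * sB - cA * cB) / (sA * cB + cA * sB) * (x + y) ^ 2
      = ((cA * sB * x - sA * cB * y) ^ 2 + (sA * sB) ^ 2 * (x + y) ^ 2) /
        (sA * sB * (sA * cB + cA * sB)) := by
    field_simp
    ring
  rw [heq]
  apply div_pos _ (by positivity)
  by_cases h0 : x + y = 0
  · have hy : y = -x := by linarith
    have hx : x ≠ 0 := by
      rcases hxy with h | h
      · exact h
      · intro h'; apply h; rw [hy, h', neg_zero]
    have h1 : cA * sB * x - sA * cB * y = (sA * cB + cA * sB) * x := by rw [hy]; ring
    have h2 : 0 < ((sA * cB + cA * sB) * x) ^ 2 := by positivity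
    rw [h1, h0]
    simpa using h2
  · have h2 : 0 < (sA * sB) ^ 2 * (x + y) ^ 2 := by positivity
    nlinarith [sq_nonneg (cA * sB * x - sA * cB * y)]

theorem surfTen_hessian_posDef (ρ₁ ρ₂ : ℝ) (h1 : 0 < ρ₁) (h2 : 0 < ρ₂) (h12 : ρ₁ + ρ₂ < 1) :
    (!![π * Real.cot (π * ρ₁) + π * Real.cot (π * (1 - ρ₁ - ρ₂)),
        π * Real.cot (π * (1 - ρ₁ - ρ₂));
        π * Real.cot (π * (1 - ρ₁ - ρ₂)),
        π * Real.cot (π * ρ₂) + π * Real.cot (π * (1 - ρ₁ - ρ₂))] : Matrix (Fin 2) (Fin 2) ℝ).PosDef := by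
  have hπ := Real.pi_pos
  set A := π * ρ₁ with hA
  set B := π * ρ₂ with hB
  set C := π * (1 - ρ₁ - ρ₂) with hC
  have hsA : 0 < Real.sin A := Real.sin_pos_of_pos_of_lt_pi (by positivity)
    (by rw [hA]; nlinarith)
  have hsB : 0 < Real.sin B := Real.sin_pos_of_pos_of_lt_pi (by positivity)
    (by rw [hB]; nlinarith)
  have hsC : 0 < Real.sin C := Real.sin_pos_of_pos_of_lt_pi (by rw [hC]; nlinarith)
    (by rw [hC]; nlinarith)
  have hCeq : C = π - (A + B) := by rw [hA, hB, hC]; ring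
  have hs : Real.sin C = Real.sin A * Real.cos B + Real.cos A * Real.sin B := by
    rw [hCeq, Real.sin_pi_sub, Real.sin_add]
  have hc : Real.cos C = Real.sin A * Real.sin B - Real.cos A * Real.cos B := by
    rw [hCeq, Real.cos_pi_sub, Real.cos_add]; ring
  rw [Matrix.posDef_iff_dotProduct_mulVec]
  constructor
  · ext i j
    fin_cases i <;> fin_cases j <;>
      simp [Matrix.conjTranspose, Matrix.vecHead, Matrix.vecTail]
  · intro x hx
    simp only [dotProduct, Matrix.mulVec, Fin.sum_univ_two, Matrix.cons_val_zero,
      Matrix.cons_val_one, Matrix.head_cons, Matrix.cons_val', Matrix.empty_val',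
      Matrix.cons_val_fin_one, RCLike.star_def, star_trivial, Matrix.of_apply,
      Matrix.vecHead, Matrix.vecTail]
    have hxy : x 0 ≠ 0 ∨ x 1 ≠ 0 := by
      by_contra h
      push_neg at h
      apply hx
      funext i
      fin_cases i
      · exact h.1
      · exact h.2
    have hkey := cot_quad_key (Real.cos A) (Real.sin A) (Real.cos B) (Real.sin B)
      (Real.cos C) (Real.sin C) (x 0) (x 1) hsA hsB hsC hs hc hxy
    have hexpr : x 0 * ((π * Real.cot A + π * Real.cot C) * x 0 + π * Real.cot C * x 1) +
        x 1 * (π * Real.cot C * x 0 + (π * Real.cot B + π * Real.cot C) * x 1)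
        = π * (Real.cos A / Real.sin A * (x 0) ^ 2 + Real.cos B / Real.sin B * (x 1) ^ 2 +
          Real.cos C / Real.sin C * (x 0 + x 1) ^ 2) := by
      rw [Real.cot_eq_cos_div_sin, Real.cot_eq_cos_div_sin, Real.cot_eq_cos_div_sin]
      field_simp
      ring
    rw [hexpr]
    exact mul_pos hπ hkey
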